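/- Let W be a subspace of ℝ^n with h := dim W, let z_1,…,z_k ∈ ℝ^n be such that dim(W + span{z_1,…,z_k}) = h + k, and set B_0 := W + span{z_1,…,z_k}. Let δ ⊆ {1,…,k}, let j ∈ δ, let w ∈ ℝ^n with w ∉ B_0, and set B_j := W + span{z_1,…,z_{j−1}, w, z_{j+1},…,z_k}. Then (W + Σ_{i∈δ} span{z_i}) ∩ B_j = W + Σ_{i∈δ∖{j}} span{z_i}. -/

import Mathlib

open Submodule Set Module

/-- For a linearly independent family, spans of images intersect in the span of the
image of the intersection. -/
lemma span_image_inter_aux {K V ι : Type*} [Field K] [AddCommGroup V] [Module K V]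
    {v : ι → V} (hv : LinearIndependent K v) (s t : Set ι) :
    span K (v '' s) ⊓ span K (v '' t) = span K (v '' (s ∩ t)) := by
  apply le_antisymm
  · intro x hx
    obtain ⟨hxs, hxt⟩ := Submodule.mem_inf.mp hx
    have hdecomp : span K (v '' s) = span K (v '' (s ∩ t)) ⊔ span K (v '' (s \ t)) := by
      rw [← span_union, ← image_union, inter_union_diff]
    rw [hdecomp] at hxs
    obtain ⟨a, ha, b, hb, rfl⟩ := Submodule.mem_sup.mp hxs
    have hb' : b ∈ span K (v '' t) := by
      have : b = (a + b) - a := by abel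
      rw [this]
      exact sub_mem hxt (span_mono (image_mono inter_subset_right) ha)
    have hbot : b ∈ span K (v '' (s \ t)) ⊓ span K (v '' t) :=
      Submodule.mem_inf.mpr ⟨hb, hb'⟩
    rw [(hv.disjoint_span_image disjoint_sdiff_left).eq_bot] at hbot
    simp only [Submodule.mem_bot] at hbot
    simpa [hbot] using ha
  · exact le_inf (span_mono (image_mono inter_subset_left))
      (span_mono (image_mono inter_subset_right))

theorem inter_update_eq
    (n k : ℕ) (W : Submodule ℝ (Fin n → ℝ)) (z : Fin k → (Fin n → ℝ))
    (hdim : Module.finrank ℝ ↥(W ⊔ Submodule.span ℝ (Set.range z)) =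
      Module.finrank ℝ ↥W + k)
    (δ : Finset (Fin k)) (j : Fin k) (hj : j ∈ δ)
    (w : Fin n → ℝ) (hw : w ∉ W ⊔ Submodule.span ℝ (Set.range z)) :
    (W ⊔ ⨆ i ∈ δ, Submodule.span ℝ {z i}) ⊓
        (W ⊔ Submodule.span ℝ (Set.range (Function.update z j w))) =
      W ⊔ ⨆ i ∈ δ.erase j, Submodule.span ℝ {z i} := by
  classical
  -- biSup of singleton spans = span of image
  have hsup : ∀ s : Finset (Fin k),
      (⨆ i ∈ s, Submodule.span ℝ {z i}) = span ℝ (z '' ↑s) := by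
    intro s
    rw [span_eq_iSup_of_singleton_spans, iSup_image]
    simp
  rw [hsup δ, hsup (δ.erase j)]
  set S := span ℝ (Set.range z) with hS
  -- finrank bookkeeping : W ⊓ S = ⊥ and finrank S = k
  have h1 := Submodule.finrank_sup_add_finrank_inf_eq W S
  have h2 : finrank ℝ S ≤ k := by
    calc finrank ℝ S ≤ (Set.range z).toFinset.card := finrank_span_le_card _
      _ = (Finset.univ.image z).card := by rw [Set.toFinset_range]
      _ ≤ Finset.univ.card := Finset.card_image_le
      _ = k := by simp
  have h3 : finrank ℝ ↥(W ⊓ S) = 0 ∧ finrank ℝ S = k := by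
    rw [hdim] at h1; omega
  have hWS : W ⊓ S = ⊥ := Submodule.finrank_eq_zero.mp h3.1
  have hz : LinearIndependent ℝ z := by
    rw [linearIndependent_iff_card_eq_finrank_span]
    simp only [Set.finrank, ← hS, h3.2, Fintype.card_fin]
    exact h3.2.symm
  -- pass to the quotient
  set q := W.mkQ with hq
  set g : Fin k → ((Fin n → ℝ) ⧸ W) := ⇑q ∘ z with hg
  have hgind : LinearIndependent ℝ g := by
    apply hz.map
    rw [ker_mkQ]
    exact (disjoint_iff.mpr (by rw [inf_comm]; exact hWS))
  have hspanrange : span ℝ (Set.range g) = Submodule.map q S := by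
    rw [hS, Submodule.map_span, Set.range_comp]
  have hwq : q w ∉ span ℝ (Set.range g) := by
    rw [hspanrange]
    rintro ⟨y, hy, hyw⟩
    apply hw
    have hwy : w - y ∈ W := by
      have h' := hyw.symm
      rwa [hq, Submodule.mkQ_apply, Submodule.mkQ_apply, Submodule.Quotient.eq] at h'
    have hwe : w = y + (w - y) := by abel
    rw [hwe]
    exact add_mem (Submodule.mem_sup_right hy) (Submodule.mem_sup_left hwy)
  -- key: W ⊔ span T = comap q (span (q '' T))
  have hkey : ∀ T : Set (Fin n → ℝ),
      W ⊔ span ℝ T = Submodule.comap q (span ℝ (⇑q '' T)) := by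
    intro T
    have hmap : Submodule.map q (W ⊔ span ℝ T) = span ℝ (⇑q '' T) := by
      rw [Submodule.map_sup, Submodule.map_span]
      have : Submodule.map q W = ⊥ := by
        apply le_bot_iff.mp
        rw [Submodule.map_le_iff_le_comap]
        intro x hx
        simp [hq, Submodule.Quotient.mk_eq_zero, hx]
      rw [this, bot_sup_eq]
    rw [← hmap, Submodule.comap_map_eq, ker_mkQ, sup_assoc, sup_comm (span ℝ T) W,
      ← sup_assoc, sup_idem]
  rw [hkey, hkey, hkey, ← Submodule.comap_inf]
  congr 1
  -- rewrite images
  have him : ∀ s : Finset (Fin k), ⇑q '' (z '' ↑s) = g '' ↑s := by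
    intro s; rw [Set.image_image]; rfl
  have hupd : ⇑q '' (Set.range (Function.update z j w))
      = Set.range (Function.update g j (q w)) := by
    rw [← Set.range_comp, Function.comp_update]
  have hrange : Set.range (Function.update g j (q w))
      = insert (q w) (g '' ({j}ᶜ : Set (Fin k))) := by
    ext y
    simp only [Set.mem_range, Function.update_apply, Set.mem_insert_iff, Set.mem_image,
      Set.mem_compl_iff, Set.mem_singleton_iff]
    constructor
    · rintro ⟨i, hi⟩
      by_cases h : i = j
      · left; rw [if_pos h] at hi; exact hi.symm
      · right; exact ⟨i, h, by rwa [if_neg h] at hi⟩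
    · rintro (rfl | ⟨i, hij, rfl⟩)
      · exact ⟨j, by simp⟩
      · exact ⟨i, by rw [if_neg hij]⟩
  rw [him, him, hupd, hrange, Submodule.span_insert]
  -- now prove the intersection identity in the quotient
  apply le_antisymm
  · intro x hx
    obtain ⟨hx1, hx2⟩ := Submodule.mem_inf.mp hx
    obtain ⟨a, ha, b, hb, rfl⟩ := Submodule.mem_sup.mp hx2
    obtain ⟨c, rfl⟩ := Submodule.mem_span_singleton.mp ha
    by_cases hc : c = 0
    · subst hc
      rw [zero_smul, zero_add] at hx1 ⊢
      have : b ∈ span ℝ (g '' ↑δ) ⊓ span ℝ (g '' ({j}ᶜ : Set (Fin k))) :=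
        Submodule.mem_inf.mpr ⟨hx1, hb⟩
      rw [span_image_inter_aux hgind] at this
      have hset : (↑δ ∩ ({j}ᶜ : Set (Fin k))) = ↑(δ.erase j) := by
        rw [Finset.coe_erase, Set.diff_eq]
      rwa [hset] at this
    · exfalso
      apply hwq
      have hmem : c • q w ∈ span ℝ (Set.range g) := by
        have h1 : c • q w + b ∈ span ℝ (Set.range g) :=
          span_mono (image_subset_range _ _) hx1
        have h2 : b ∈ span ℝ (Set.range g) :=
          span_mono (image_subset_range _ _) hb
        have : c • q w = (c • q w + b) - b := by abel
        rw [this]; exact sub_mem h1 h2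
      have : q w = c⁻¹ • (c • q w) := by rw [smul_smul, inv_mul_cancel₀ hc, one_smul]
      rw [this]
      exact smul_mem _ _ hmem
  · apply le_inf
    · exact span_mono (image_mono (by exact_mod_cast Finset.erase_subset j δ))
    · refine le_trans ?_ le_sup_right
      apply span_mono
      apply image_mono
      intro i hi
      simp only [Set.mem_compl_iff, Set.mem_singleton_iff]
      exact Finset.ne_of_mem_erase (by exact_mod_cast hi)
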